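/- Let d, m ≥ 1 be natural numbers and let σ = (Fin d) ⊕ (Fin m × Fin m) ⊕ Unit be a variable type, writing x_i (i ∈ Fin d), y_{rs} ((r,s) ∈ Fin m × Fin m) and t for the three kinds of variables. In MvPolynomial σ ℂ set F := (∏_{i ∈ Fin d} X(x_i)) − X(t) · det(Y), where Y is the m×m matrix whose (r,s)-entry is X(y_{rs}). Then for every point p : σ → ℂ with p(t) ≠ 0, the following are equivalent: (a) eval p F = 0 and eval p (pderiv v F) = 0 for every variable v ∈ σ; (b) there exist indices i ≠ i′ in Fin d with p(x_i) = p(x_{i′}) = 0, and the m×m complex matrix (p(y_{rs}))_{r,s} has rank A satisfying rank A + 2 ≤ m. -/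

import Mathlib

open MvPolynomial Matrix Finset Equiv Module Submodule


lemma pderiv_finset_prod {ι σ' R : Type*} [CommSemiring R] [DecidableEq σ'] [DecidableEq ι]
    (v : σ') (s : Finset ι) (f : ι → MvPolynomial σ' R) :
    pderiv v (∏ i ∈ s, f i) = ∑ i ∈ s, pderiv v (f i) * ∏ j ∈ s.erase i, f j := by
  induction s using Finset.induction with
  | empty => simp
  | insert a s ha ih =>
    rw [Finset.prod_insert ha, pderiv_mul, ih, Finset.sum_insert ha,
      Finset.erase_insert ha, Finset.mul_sum]
    congr 1
    refine Finset.sum_congr rfl fun i hi => ?_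
    rw [Finset.erase_insert_of_ne (by rintro rfl; exact ha hi),
      Finset.prod_insert (fun h => ha (Finset.mem_of_mem_erase h))]
    ring

lemma eval_pderiv_prod_X {ι σ' : Type*} [DecidableEq σ'] [DecidableEq ι]
    (p : σ' → ℂ) (v : σ') (s : Finset ι) (f : ι → σ') :
    eval p (pderiv v (∏ i ∈ s, X (f i) : MvPolynomial σ' ℂ)) =
      ∑ i ∈ s, (if f i = v then ∏ j ∈ s.erase i, p (f j) else 0) := by
  rw [pderiv_finset_prod, map_sum]
  refine Finset.sum_congr rfl fun i hi => ?_
  rw [pderiv_X]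
  rcases eq_or_ne (f i) v with h | h
  · simp [h, Pi.single_apply]
  · simp [h, Pi.single_apply, Ne.symm h]


lemma my_rank_add_le {m n : ℕ} (A B : Matrix (Fin m) (Fin n) ℂ) :
    (A + B).rank ≤ A.rank + B.rank := by
  rw [Matrix.rank, Matrix.rank, Matrix.rank]
  have h : LinearMap.range (A + B).mulVecLin ≤
      LinearMap.range A.mulVecLin ⊔ LinearMap.range B.mulVecLin := by
    rintro x ⟨y, rfl⟩
    rw [Matrix.mulVecLin_add]
    exact Submodule.add_mem_sup (LinearMap.mem_range_self _ y) (LinearMap.mem_range_self _ y)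
  exact (Submodule.finrank_mono h).trans
    (Submodule.finrank_add_le_finrank_add_finrank _ _)

lemma rank_single_mul {m : ℕ} (u : Matrix (Fin m) Unit ℂ) (w : Matrix Unit (Fin m) ℂ) :
    (u * w).rank ≤ 1 := by
  refine (Matrix.rank_mul_le_right u w).trans ?_
  simpa using Matrix.rank_le_card_height w

lemma rank_updateRow_le {m : ℕ} (A : Matrix (Fin m) (Fin m) ℂ) (j : Fin m) (r : Fin m → ℂ) :
    (A.updateRow j r).rank ≤ A.rank + 1 := by
  have hE : A.updateRow j r = A +
      (Matrix.of fun a (_ : Unit) => if a = j then (1 : ℂ) else 0) *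
        (Matrix.of fun (_ : Unit) b => r b - A j b) := by
    ext a b
    by_cases h : a = j <;>
      simp [Matrix.updateRow_apply, Matrix.mul_apply, h]
  rw [hE]
  exact (my_rank_add_le _ _).trans (by
    have := rank_single_mul (Matrix.of fun a (_ : Unit) => if a = j then (1 : ℂ) else 0)
      (Matrix.of fun (_ : Unit) b => r b - A j b)
    omega)

lemma det_eq_zero_of_rank_lt {m : ℕ} (A : Matrix (Fin m) (Fin m) ℂ) (h : A.rank < m) :
    A.det = 0 := by
  by_contra hd
  have : IsUnit A := A.isUnit_iff_isUnit_det.2 (isUnit_iff_ne_zero.2 hd)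
  have := Matrix.rank_of_isUnit A this
  rw [this] at h
  simp at h

lemma adjugate_eq_zero_of_rank {m : ℕ} (A : Matrix (Fin m) (Fin m) ℂ)
    (h : A.rank + 2 ≤ m) : A.adjugate = 0 := by
  ext i j
  rw [Matrix.adjugate_apply]
  refine det_eq_zero_of_rank_lt _ ?_
  have := rank_updateRow_le A j (Pi.single i 1)
  omega


lemma isUnit_of_rank_eq {m : ℕ} (A : Matrix (Fin m) (Fin m) ℂ) (h : A.rank = m) :
    IsUnit A := by
  rw [← Matrix.linearIndependent_rows_iff_isUnit, linearIndependent_iff_card_eq_finrank_span]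
  rw [Set.finrank, ← Matrix.rank_eq_finrank_span_row, h, Fintype.card_fin]

lemma rank_le_of_adjugate_eq_zero {m : ℕ} (hm : 1 ≤ m) (A : Matrix (Fin m) (Fin m) ℂ)
    (h : A.adjugate = 0) : A.rank + 2 ≤ m := by
  have hd : A.det = 0 := by
    have h1 := Matrix.mul_adjugate A
    rw [h, Matrix.mul_zero] at h1
    have h2 := congrFun (congrFun h1.symm ⟨0, hm⟩) ⟨0, hm⟩
    simpa using h2
  have hle : A.rank ≤ m := by simpa using A.rank_le_card_width
  have hne : A.rank ≠ m := by
    intro hr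
    exact (isUnit_iff_ne_zero.1 (A.isUnit_iff_isUnit_det.1 (isUnit_of_rank_eq A hr))) hd
  have hne1 : A.rank ≠ m - 1 := by
    intro hr
    -- rows are not linearly independent
    have hnli : ¬ LinearIndependent ℂ (fun i => A i) := by
      intro hli
      have := linearIndependent_iff_card_eq_finrank_span.1 hli
      rw [Set.finrank, show (fun i => A i) = A.row from rfl, ← Matrix.rank_eq_finrank_span_row, hr, Fintype.card_fin] at this
      omega
    obtain ⟨g, hg, j₀, hj₀⟩ := Fintype.not_linearIndependent_iff.1 hnli
    set W : Submodule ℂ (Fin m → ℂ) := Submodule.span ℂ (A '' {j₀}ᶜ) with hW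
    have hAj0 : A j₀ ∈ W := by
      have hsum : g j₀ • A j₀ = -∑ i ∈ Finset.univ.erase j₀, g i • A i := by
        rw [eq_neg_iff_add_eq_zero, ← hg]
        exact Finset.add_sum_erase Finset.univ (fun i => g i • A i) (Finset.mem_univ j₀)
      have hrepr : A j₀ = -(g j₀)⁻¹ • ∑ i ∈ Finset.univ.erase j₀, g i • A i :=
        calc A j₀ = (g j₀)⁻¹ • (g j₀ • A j₀) := (inv_smul_smul₀ hj₀ _).symm
        _ = (g j₀)⁻¹ • (-∑ i ∈ Finset.univ.erase j₀, g i • A i) := by rw [hsum]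
        _ = -(g j₀)⁻¹ • ∑ i ∈ Finset.univ.erase j₀, g i • A i := by
            rw [smul_neg, neg_smul]
      rw [hrepr]
      refine Submodule.smul_mem _ _ (Submodule.sum_mem _ fun i hi => Submodule.smul_mem _ _ ?_)
      exact Submodule.subset_span ⟨i, by simpa using (Finset.mem_erase.1 hi).1, rfl⟩
    have hWspan : Submodule.span ℂ (Set.range A) = W := by
      have : Set.range A = insert (A j₀) (A '' {j₀}ᶜ) := by
        rw [show Set.range A = Set.range A.row from rfl, ← Set.image_univ, ← Set.union_compl_self {j₀},
          ← Set.insert_eq, Set.image_insert_eq]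
        rfl
      rw [this, Submodule.span_insert_eq_span hAj0]
    have hWrank : finrank ℂ W = m - 1 := by
      rw [← hWspan, show Set.range A = Set.range A.row from rfl, ← Matrix.rank_eq_finrank_span_row, hr]
    -- there is a standard basis vector not in W
    have hWne : W ≠ ⊤ := by
      intro htop
      rw [htop, finrank_top, finrank_pi] at hWrank
      simp at hWrank
      omega
    have hex : ∃ i : Fin m, Pi.single i (1 : ℂ) ∉ W := by
      by_contra hall
      push_neg at hall
      apply hWne
      rw [eq_top_iff]
      intro x _
      have : x = ∑ i : Fin m, x i • (Pi.single i 1 : Fin m → ℂ) := by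
        ext j; simp [Pi.single_apply]
      rw [this]
      exact Submodule.sum_mem _ fun i _ => Submodule.smul_mem _ _ (hall i)
    obtain ⟨i, hi⟩ := hex
    set M := A.updateRow j₀ (Pi.single i (1 : ℂ)) with hM
    -- rows of M off j₀ agree with A
    have hMrow : ∀ x : Fin m, x ≠ j₀ → M x = A x := fun x hx =>
      Matrix.updateRow_ne hx
    have himg : (fun j => M j) '' {j₀}ᶜ = A '' {j₀}ᶜ := by
      apply Set.image_congr
      intro x hx
      exact hMrow x hx
    have hli' : LinearIndependent ℂ (fun x : ({j₀}ᶜ : Set (Fin m)) => M (x : Fin m)) := by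
      have heq : (fun x : ({j₀}ᶜ : Set (Fin m)) => M (x : Fin m)) =
          (fun x : ({j₀}ᶜ : Set (Fin m)) => A (x : Fin m)) := by
        funext x; exact hMrow x x.2
      rw [heq, linearIndependent_iff_card_eq_finrank_span]
      have hcard : Fintype.card ({j₀}ᶜ : Set (Fin m)) = m - 1 := by
        rw [Fintype.card_compl_set, Set.card_singleton, Fintype.card_fin]
      rw [hcard, Set.finrank]
      have : Set.range (fun x : ({j₀}ᶜ : Set (Fin m)) => A (x : Fin m)) = A '' {j₀}ᶜ :=
        (Set.image_eq_range _ _).symm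
      rw [this, ← hW, hWrank]
    have hliM : LinearIndependent ℂ (fun j => M j) := by
      have h1 : LinearIndependent ℂ (fun x : (insert j₀ ({j₀}ᶜ : Set (Fin m)) : Set (Fin m)) => M (x : Fin m)) := by
        refine (linearIndepOn_insert (f := fun j => M j) (by simp)).2 ⟨hli', ?_⟩
        rw [himg, ← hW]
        rw [hM, Matrix.updateRow_self]
        exact hi
      have h2 : (insert j₀ ({j₀}ᶜ : Set (Fin m)) : Set (Fin m)) = Set.univ := by
        rw [Set.insert_eq, Set.union_compl_self]
      rw [h2] at h1
      exact (linearIndependent_equiv (Equiv.Set.univ (Fin m)) (f := fun j => M j)).1 h1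
    have hunit : IsUnit M := Matrix.linearIndependent_rows_iff_isUnit.1 hliM
    have hdet : M.det ≠ 0 := isUnit_iff_ne_zero.1 (M.isUnit_iff_isUnit_det.1 hunit)
    apply hdet
    rw [hM, ← Matrix.adjugate_apply, h]
    rfl
  omega



variable {d m : ℕ}

abbrev Vt (d m : ℕ) := Fin d ⊕ (Fin m × Fin m) ⊕ Unit

noncomputable def Ym (d m : ℕ) : Matrix (Fin m) (Fin m) (MvPolynomial (Vt d m) ℂ) :=
  Matrix.of fun r s : Fin m => (X (Sum.inr (Sum.inl (r, s))) : MvPolynomial (Vt d m) ℂ)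

lemma detY_eq : (Ym d m).det =
    ∑ σ : Perm (Fin m), ((Equiv.Perm.sign σ : ℤ) : MvPolynomial (Vt d m) ℂ) *
      ∏ i : Fin m, X (Sum.inr (Sum.inl (σ i, i))) := by
  rw [Matrix.det_apply']
  rfl

lemma eval_pderiv_detY (p : Vt d m → ℂ) (v : Vt d m) :
    eval p (pderiv v (Ym d m).det) =
      ∑ σ : Perm (Fin m), ((Equiv.Perm.sign σ : ℤ) : ℂ) *
        ∑ i : Fin m, (if (Sum.inr (Sum.inl (σ i, i)) : Vt d m) = v then
          ∏ j ∈ Finset.univ.erase i, p (Sum.inr (Sum.inl (σ j, j))) else 0) := by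
  rw [detY_eq, map_sum, map_sum]
  refine Finset.sum_congr rfl fun σ _ => ?_
  have hc : ((Equiv.Perm.sign σ : ℤ) : MvPolynomial (Vt d m) ℂ) =
      C ((Equiv.Perm.sign σ : ℤ) : ℂ) := by
    simp
  rw [hc, pderiv_C_mul, _root_.map_mul, eval_C]
  congr 1
  exact eval_pderiv_prod_X p v Finset.univ fun i => Sum.inr (Sum.inl (σ i, i))

noncomputable def Bm (d m : ℕ) (p : Vt d m → ℂ) : Matrix (Fin m) (Fin m) ℂ :=
  Matrix.of fun r s : Fin m => p (Sum.inr (Sum.inl (r, s)))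

lemma eval_pderiv_detY_y (p : Vt d m → ℂ) (r s : Fin m) :
    eval p (pderiv (Sum.inr (Sum.inl (r, s)) : Vt d m) (Ym d m).det) =
      (Bm d m p).adjugate s r := by
  rw [eval_pderiv_detY, Matrix.adjugate_apply, Matrix.det_apply']
  refine Finset.sum_congr rfl fun σ _ => ?_
  congr 1
  have hinner : ∑ i : Fin m, (if (Sum.inr (Sum.inl (σ i, i)) : Vt d m) = Sum.inr (Sum.inl (r, s))
        then ∏ j ∈ Finset.univ.erase i, p (Sum.inr (Sum.inl (σ j, j))) else 0) =
      if σ s = r then ∏ j ∈ Finset.univ.erase s, (Bm d m p) (σ j) j else 0 := by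
    rw [Finset.sum_eq_single_of_mem s (Finset.mem_univ s)]
    · by_cases h : σ s = r
      · simp only [h, if_pos rfl]
        rfl
      · rw [if_neg (by simp [h]), if_neg h]
    · intro i _ hi
      rw [if_neg (by simp [hi])]
  rw [hinner]
  by_cases h : σ s = r
  · rw [if_pos h]
    rw [← Finset.mul_prod_erase Finset.univ
        (fun i => (Bm d m p).updateRow r (Pi.single s 1) (σ i) i) (Finset.mem_univ s)]
    have h1 : (Bm d m p).updateRow r (Pi.single s 1) (σ s) s = 1 := by
      rw [h, Matrix.updateRow_self, Pi.single_eq_same]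
    rw [h1, one_mul]
    refine Finset.prod_congr rfl fun j hj => ?_
    have hj' : σ j ≠ r := by
      rw [← h]
      exact fun hc => (Finset.mem_erase.1 hj).1 (σ.injective hc)
    rw [Matrix.updateRow_ne hj']
  · rw [if_neg h]
    refine (Finset.prod_eq_zero (Finset.mem_univ (σ⁻¹ r)) ?_).symm
    have h2 : σ (σ⁻¹ r) = r := σ.apply_symm_apply r
    rw [h2, Matrix.updateRow_self, Pi.single_eq_of_ne]
    intro hc
    exact h (by rw [← hc, h2])

lemma eval_pderiv_detY_other (p : Vt d m → ℂ) (v : Vt d m)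
    (h : ∀ r s : Fin m, v ≠ Sum.inr (Sum.inl (r, s))) :
    eval p (pderiv v (Ym d m).det) = 0 := by
  rw [eval_pderiv_detY]
  refine Finset.sum_eq_zero fun σ _ => ?_
  rw [Finset.sum_eq_zero fun i _ => ?_, mul_zero]
  rw [if_neg fun hc => h (σ i) i hc.symm]

lemma eval_detY (p : Vt d m → ℂ) : eval p (Ym d m).det = (Bm d m p).det := by
  rw [show ((eval p) (Ym d m).det) = ((Ym d m).map (eval p)).det from RingHom.map_det _ _]
  congr 1
  ext r s
  simp [Ym, Bm]

lemma eval_pderiv_Px_x (p : Vt d m → ℂ) (i0 : Fin d) :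
    eval p (pderiv (Sum.inl i0 : Vt d m) (∏ i : Fin d, (X (Sum.inl i) : MvPolynomial (Vt d m) ℂ))) =
      ∏ j ∈ Finset.univ.erase i0, p (Sum.inl j) := by
  rw [eval_pderiv_prod_X]
  rw [Finset.sum_eq_single_of_mem i0 (Finset.mem_univ i0)]
  · rw [if_pos rfl]
  · intro i _ hi
    rw [if_neg (by simp [hi])]

lemma eval_pderiv_Px_other (p : Vt d m → ℂ) (v : Vt d m) (h : ∀ i : Fin d, v ≠ Sum.inl i) :
    eval p (pderiv v (∏ i : Fin d, (X (Sum.inl i) : MvPolynomial (Vt d m) ℂ))) = 0 := by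
  rw [eval_pderiv_prod_X]
  refine Finset.sum_eq_zero fun i _ => ?_
  rw [if_neg fun hc => h i hc.symm]

theorem singular_locus_of_product_eq_t_det
    (d m : ℕ) (hd : 1 ≤ d) (hm : 1 ≤ m)
    (F : MvPolynomial (Fin d ⊕ (Fin m × Fin m) ⊕ Unit) ℂ)
    (hF : F = (∏ i : Fin d, X (Sum.inl i)) -
      X (Sum.inr (Sum.inr ())) *
        (Matrix.of fun r s : Fin m =>
          (X (Sum.inr (Sum.inl (r, s))) :
            MvPolynomial (Fin d ⊕ (Fin m × Fin m) ⊕ Unit) ℂ)).det)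
    (p : (Fin d ⊕ (Fin m × Fin m) ⊕ Unit) → ℂ)
    (hp : p (Sum.inr (Sum.inr ())) ≠ 0) :
    (eval p F = 0 ∧ ∀ v, eval p (pderiv v F) = 0) ↔
      ((∃ i i' : Fin d, i ≠ i' ∧ p (Sum.inl i) = 0 ∧ p (Sum.inl i') = 0) ∧
        (Matrix.of fun r s : Fin m => p (Sum.inr (Sum.inl (r, s)))).rank + 2 ≤ m) := by
  have hFY : F = (∏ i : Fin d, X (Sum.inl i)) -
      X (Sum.inr (Sum.inr ()) : Vt d m) * (Ym d m).det := hF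
  have hBm : (Matrix.of fun r s : Fin m => p (Sum.inr (Sum.inl (r, s)))) = Bm d m p := rfl
  rw [hBm]
  subst hFY
  set B := Bm d m p with hB
  -- evaluation of F
  have hevalF : eval p ((∏ i : Fin d, X (Sum.inl i)) -
      X (Sum.inr (Sum.inr ()) : Vt d m) * (Ym d m).det) =
      (∏ i : Fin d, p (Sum.inl i)) - p (Sum.inr (Sum.inr ())) * B.det := by
    rw [map_sub, _root_.map_mul, eval_X, eval_detY, map_prod]
    simp [← hB]
  -- evaluation of partial derivatives
  have hpd : ∀ v : Vt d m, eval p (pderiv v ((∏ i : Fin d, X (Sum.inl i)) -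
        X (Sum.inr (Sum.inr ()) : Vt d m) * (Ym d m).det)) =
      eval p (pderiv v (∏ i : Fin d, X (Sum.inl i))) -
        (eval p (pderiv v (X (Sum.inr (Sum.inr ()) : Vt d m))) * B.det +
          p (Sum.inr (Sum.inr ())) * eval p (pderiv v (Ym d m).det)) := by
    intro v
    rw [map_sub, pderiv_mul, map_sub, map_add, _root_.map_mul, _root_.map_mul,
      eval_detY, eval_X]
  have hpd_t : eval p (pderiv (Sum.inr (Sum.inr ()) : Vt d m)
      ((∏ i : Fin d, X (Sum.inl i)) - X (Sum.inr (Sum.inr ()) : Vt d m) * (Ym d m).det)) =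
      - B.det := by
    rw [hpd, eval_pderiv_Px_other p _ (by simp), eval_pderiv_detY_other p _ (by simp),
      pderiv_X_self, _root_.map_one]
    ring
  have hpd_x : ∀ i0 : Fin d, eval p (pderiv (Sum.inl i0 : Vt d m)
      ((∏ i : Fin d, X (Sum.inl i)) - X (Sum.inr (Sum.inr ()) : Vt d m) * (Ym d m).det)) =
      ∏ j ∈ Finset.univ.erase i0, p (Sum.inl j) := by
    intro i0
    rw [hpd, eval_pderiv_Px_x, eval_pderiv_detY_other p _ (by simp),
      pderiv_X_of_ne (by simp), map_zero]
    ring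
  have hpd_y : ∀ r s : Fin m, eval p (pderiv (Sum.inr (Sum.inl (r, s)) : Vt d m)
      ((∏ i : Fin d, X (Sum.inl i)) - X (Sum.inr (Sum.inr ()) : Vt d m) * (Ym d m).det)) =
      - (p (Sum.inr (Sum.inr ())) * B.adjugate s r) := by
    intro r s
    rw [hpd, eval_pderiv_Px_other p _ (by simp), eval_pderiv_detY_y,
      pderiv_X_of_ne (by simp), map_zero]
    ring
  constructor
  · rintro ⟨hF0, hDv⟩
    -- determinant vanishes
    have hD : B.det = 0 := by
      have := hDv (Sum.inr (Sum.inr ()))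
      rw [hpd_t] at this
      exact neg_eq_zero.1 this
    -- adjugate vanishes
    have hadj : B.adjugate = 0 := by
      ext s r
      have := hDv (Sum.inr (Sum.inl (r, s)))
      rw [hpd_y] at this
      have := neg_eq_zero.1 this
      rcases mul_eq_zero.1 this with h | h
      · exact absurd h hp
      · simpa using h
    refine ⟨?_, rank_le_of_adjugate_eq_zero hm B hadj⟩
    -- two vanishing coordinates
    have hx : ∀ i0 : Fin d, ∏ j ∈ Finset.univ.erase i0, p (Sum.inl j) = 0 := by
      intro i0
      have := hDv (Sum.inl i0)
      rwa [hpd_x] at this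
    have hprod : (∏ i : Fin d, p (Sum.inl i)) = 0 := by
      have := hF0
      rw [hevalF, hD, mul_zero, sub_zero] at this
      exact this
    obtain ⟨j, _, hj⟩ := Finset.prod_eq_zero_iff.1 hprod
    obtain ⟨j', hj'mem, hj'⟩ := Finset.prod_eq_zero_iff.1 (hx j)
    exact ⟨j', j, (Finset.mem_erase.1 hj'mem).1, hj', hj⟩
  · rintro ⟨⟨i, i', hne, hi, hi'⟩, hrank⟩
    have hadj : B.adjugate = 0 := adjugate_eq_zero_of_rank B hrank
    have hD : B.det = 0 := det_eq_zero_of_rank_lt B (by omega)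
    constructor
    · rw [hevalF, hD, mul_zero, sub_zero]
      exact Finset.prod_eq_zero (Finset.mem_univ i) hi
    · intro v
      match v with
      | Sum.inl i0 =>
        rw [hpd_x]
        rcases eq_or_ne i i0 with rfl | h
        · exact Finset.prod_eq_zero (Finset.mem_erase.2 ⟨Ne.symm hne, Finset.mem_univ i'⟩) hi'
        · exact Finset.prod_eq_zero (Finset.mem_erase.2 ⟨h, Finset.mem_univ i⟩) hi
      | Sum.inr (Sum.inl (r, s)) =>
        rw [hpd_y, hadj]
        simp
      | Sum.inr (Sum.inr ()) =>
        rw [hpd_t, hD, neg_zero]
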